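/- Let A be an integral domain, let x ∈ A, and let w be a positive integer. Suppose there exists a prime ideal 𝔭 of A containing x such that the localization A_𝔭 is a unique factorization domain in which the image of x is a prime element. Then A[T]/(x·T^w − 1) is an integral domain. -/

import Mathlib

open Polynomial

private lemma my_reverse_reverse {R : Type*} [Semiring R] {p : R[X]}
    (h : p.coeff 0 ≠ 0) : p.reverse.reverse = p := by
  have ht : p.natTrailingDegree = 0 := natTrailingDegree_eq_zero.mpr (Or.inr h)
  have hN : p.reverse.natDegree = p.natDegree := by
    rw [reverse_natDegree, ht, Nat.sub_zero]
  ext n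
  rw [coeff_reverse, hN, coeff_reverse, revAt_invol]

private lemma my_reflect_neg {R : Type*} [Ring R] (p : R[X]) (N : ℕ) :
    reflect N (-p) = - reflect N p := by
  rw [← neg_one_mul, ← C_1, ← C_neg, reflect_C_mul, C_neg, C_1, neg_one_mul]

private lemma my_natDegree_f {R : Type*} [Ring R] {x : R} (hx : x ≠ 0) {w : ℕ} (hw : 0 < w) :
    (C x * X ^ w - 1 : R[X]).natDegree = w := by
  have h1 : (C x * X ^ w : R[X]).natDegree = w := natDegree_C_mul_X_pow w x hx
  rw [natDegree_sub_eq_left_of_natDegree_lt (by simp [h1, hw]), h1]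

private lemma my_reverse_f {R : Type*} [CommRing R] {x : R} (hx : x ≠ 0) {w : ℕ} (hw : 0 < w) :
    (C x * X ^ w - 1 : R[X]).reverse = -(X ^ w - C x) := by
  show reflect _ _ = _
  rw [my_natDegree_f hx hw, sub_eq_add_neg, reflect_add, my_reflect_neg,
    reflect_one, reflect_C_mul_X_pow, revAt_le (le_refl w), Nat.sub_self, pow_zero, mul_one]
  ring

private lemma my_reverse_F {R : Type*} [CommRing R] [Nontrivial R] (x : R) {w : ℕ} (hw : 0 < w) :
    (X ^ w - C x : R[X]).reverse = -(C x * X ^ w - 1) := by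
  have hdF : (X ^ w - C x : R[X]).natDegree = w := natDegree_X_pow_sub_C
  show reflect _ _ = _
  rw [hdF, sub_eq_add_neg, reflect_add, my_reflect_neg, reflect_C,
    reflect_monomial, revAt_le (le_refl w), Nat.sub_self, pow_zero]
  ring

/-- Divisibility by `C x * X^w - 1` is equivalent to divisibility of the reverse by
`X^w - C x`. -/
private lemma my_dvd_iff_rev {R : Type*} [CommRing R] [IsDomain R] {x : R} (hx : x ≠ 0)
    {w : ℕ} (hw : 0 < w) (p : R[X]) :
    (C x * X ^ w - 1 : R[X]) ∣ p ↔ (X ^ w - C x : R[X]) ∣ p.reverse := by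
  constructor
  · rintro ⟨q, rfl⟩
    rw [reverse_mul_of_domain, my_reverse_f hx hw]
    exact ⟨-q.reverse, by ring⟩
  · intro h
    rcases eq_or_ne p 0 with rfl | hp
    · exact dvd_zero _
    set t := p.natTrailingDegree with ht
    obtain ⟨p₀, hp₀⟩ : (X : R[X]) ^ t ∣ p :=
      X_pow_dvd_iff.mpr fun d hd => coeff_eq_zero_of_lt_natTrailingDegree hd
    have hc0 : p₀.coeff 0 ≠ 0 := by
      have : p.coeff t = p₀.coeff 0 := by
        conv_lhs => rw [hp₀]
        simpa using coeff_X_pow_mul p₀ t 0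
      rw [← this]
      exact trailingCoeff_nonzero_iff_nonzero.mpr hp
    have hrev : p.reverse = p₀.reverse := by
      rw [hp₀, mul_comm, reverse_mul_X_pow]
    rw [hrev] at h
    obtain ⟨r, hr⟩ := h
    have : p₀ = -(C x * X ^ w - 1) * r.reverse := by
      rw [← my_reverse_reverse hc0, hr, reverse_mul_of_domain, my_reverse_F x hw]
    have hdvd0 : (C x * X ^ w - 1 : R[X]) ∣ p₀ := ⟨-r.reverse, by rw [this]; ring⟩
    exact hp₀ ▸ Dvd.dvd.mul_left hdvd0 _

/-- Over a UFD, if `x` is prime then `C x * X^w - 1` is a prime polynomial. -/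
private lemma my_prime_f {R : Type*} [CommRing R] [IsDomain R] [UniqueFactorizationMonoid R]
    {x : R} (hx : Prime x) {w : ℕ} (hw : 0 < w) :
    Prime (C x * X ^ w - 1 : R[X]) := by
  have hx0 : x ≠ 0 := hx.ne_zero
  have hFmonic : (X ^ w - C x : R[X]).Monic := monic_X_pow_sub_C x hw.ne'
  have hdF : (X ^ w - C x : R[X]).natDegree = w := natDegree_X_pow_sub_C
  have hPprime : (Ideal.span {x}).IsPrime := (Ideal.span_singleton_prime hx0).mpr hx
  have hFirr : Irreducible (X ^ w - C x : R[X]) := by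
    refine Polynomial.IsEisensteinAt.irreducible (𝓟 := Ideal.span {x}) ?_ hPprime
      hFmonic.isPrimitive (by rw [hdF]; exact hw)
    refine ⟨?_, ?_, ?_⟩
    · rw [hFmonic.leadingCoeff]
      intro h1
      exact hx.not_unit (Ideal.span_singleton_eq_top.mp ((Ideal.eq_top_iff_one _).mpr h1))
    · intro n hn
      rw [hdF] at hn
      rw [coeff_sub, coeff_X_pow, if_neg hn.ne, coeff_C]
      split_ifs with h
      · rw [zero_sub]
        exact Submodule.neg_mem _ (Ideal.subset_span rfl)
      · simp
    · rw [coeff_sub, coeff_X_pow, if_neg hw.ne, coeff_C, if_pos rfl, zero_sub,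
        Ideal.span_singleton_pow, Ideal.mem_span_singleton, dvd_neg]
      intro hdvd
      obtain ⟨c, hc⟩ := hdvd
      have : x * (1 - x * c) = 0 := by rw [mul_sub, mul_one]; nth_rw 1 [hc]; ring
      rcases mul_eq_zero.mp this with h | h
      · exact hx0 h
      · exact hx.not_isUnit (IsUnit.of_mul_eq_one (a := x) c (by linear_combination -h))
  have hFprime : Prime (X ^ w - C x : R[X]) :=
    UniqueFactorizationMonoid.irreducible_iff_prime.mp hFirr
  refine ⟨?_, ?_, ?_⟩
  · intro h0
    have := my_natDegree_f hx0 hw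
    rw [h0] at this
    simp only [natDegree_zero] at this
    omega
  · exact not_isUnit_of_natDegree_pos _ (by rw [my_natDegree_f hx0 hw]; exact hw)
  · intro p q hpq
    rw [my_dvd_iff_rev hx0 hw] at hpq
    rw [reverse_mul_of_domain] at hpq
    rcases hFprime.2.2 _ _ hpq with h | h
    · exact Or.inl ((my_dvd_iff_rev hx0 hw p).mpr h)
    · exact Or.inr ((my_dvd_iff_rev hx0 hw q).mpr h)

/-- Divisibility by `C x * X^w - 1` descends along injective ring maps. -/
private lemma my_descent {A R : Type*} [CommRing A] [IsDomain A] [CommRing R] [IsDomain R]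
    (φ : A →+* R) (hinj : Function.Injective φ) {x : A} (hx : x ≠ 0)
    {w : ℕ} (hw : 0 < w) (p : A[X])
    (h : (C (φ x) * X ^ w - 1 : R[X]) ∣ p.map φ) :
    (C x * X ^ w - 1 : A[X]) ∣ p := by
  have hxR : φ x ≠ 0 := fun h0 => hx (hinj (by rw [h0, map_zero]))
  rw [my_dvd_iff_rev hxR hw] at h
  have hrevmap : (p.map φ).reverse = (p.reverse).map φ := by
    show reflect _ _ = _
    rw [natDegree_map_eq_of_injective hinj, reflect_map]
    rfl
  rw [hrevmap] at h
  have hFA : (X ^ w - C x : A[X]).map φ = X ^ w - C (φ x) := by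
    simp
  rw [← hFA, map_dvd_map φ hinj (monic_X_pow_sub_C x hw.ne')] at h
  rwa [my_dvd_iff_rev hx hw]

/-- let `A` be an integral domain, `x ∈ A`, `w ≥ 1`, and suppose some prime
ideal `𝔭` containing `x` is such that `A_𝔭` is a UFD in which the image of `x` is prime.
Then `A[T]/(x·T^w − 1)` is an integral domain. -/
theorem isDomain_polynomial_quotient_of_localization_prime
    {A : Type*} [CommRing A] [IsDomain A] (x : A) {w : ℕ} (hw : 0 < w)
    (𝔭 : Ideal A) (h𝔭 : 𝔭.IsPrime) (hx𝔭 : x ∈ 𝔭)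
    (hufd : UniqueFactorizationMonoid (Localization.AtPrime 𝔭))
    (hprime : Prime (algebraMap A (Localization.AtPrime 𝔭) x)) :
    IsDomain
      (Polynomial A ⧸ Ideal.span {Polynomial.C x * Polynomial.X ^ w - 1}) := by
  haveI := hufd
  set R := Localization.AtPrime 𝔭
  set φ : A →+* R := algebraMap A R with hφ
  have hinj : Function.Injective φ := by
    apply IsLocalization.injective R (M := 𝔭.primeCompl)
    intro a ha
    exact mem_nonZeroDivisors_of_ne_zero fun h0 => ha (h0 ▸ 𝔭.zero_mem)
  have hx0 : x ≠ 0 := fun h0 => hprime.ne_zero (by rw [h0, map_zero])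
  have hfR : Prime (C (φ x) * X ^ w - 1 : R[X]) := my_prime_f hprime hw
  have hfA : Prime (C x * X ^ w - 1 : A[X]) := by
    refine ⟨?_, ?_, ?_⟩
    · intro h0
      have := my_natDegree_f hx0 hw
      rw [h0] at this
      simp only [natDegree_zero] at this
      omega
    · exact not_isUnit_of_natDegree_pos _ (by rw [my_natDegree_f hx0 hw]; exact hw)
    · intro p q hpq
      have h1 : (C (φ x) * X ^ w - 1 : R[X]) ∣ (p.map φ) * (q.map φ) := by
        obtain ⟨r, hr⟩ := hpq
        refine ⟨r.map φ, ?_⟩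
        rw [← Polynomial.map_mul, hr]
        simp
      rcases hfR.2.2 _ _ h1 with h2 | h2
      · exact Or.inl (my_descent φ hinj hx0 hw p h2)
      · exact Or.inr (my_descent φ hinj hx0 hw q h2)
  rw [Ideal.Quotient.isDomain_iff_prime]
  exact (Ideal.span_singleton_prime hfA.1).mpr hfA
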